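/- No-dimension Carathéodory theorem: Let P be a finite set of n points in EuclideanSpace ℝ (Fin d), let r be an integer with 1 ≤ r ≤ n, and let a ∈ convexHull ℝ P. Then there exists a subset Q of P with exactly r elements such that the distance from a to the convex hull of Q satisfies infDist a (convexHull ℝ Q) ≤ diam P / sqrt(2*r). -/

import Mathlib

open Finset

variable {E : Type*} [NormedAddCommGroup E] [InnerProductSpace ℝ E]

lemma avg_exists (s : Finset E) (w : E → ℝ) (hw0 : ∀ p ∈ s, 0 ≤ w p)
    (hw1 : ∑ p ∈ s, w p = 1) (f : E → ℝ) (c : ℝ)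
    (hfc : ∑ p ∈ s, w p * f p ≤ c) : ∃ p ∈ s, f p ≤ c := by
  classical
  set t := s.filter (fun p => 0 < w p) with ht
  have hts : t ⊆ s := filter_subset _ _
  have hsum : ∀ g : E → ℝ, ∑ p ∈ s, w p * g p = ∑ p ∈ t, w p * g p := by
    intro g
    refine (Finset.sum_filter_of_ne ?_).symm
    intro p hp hne
    rcases (hw0 p hp).lt_or_eq with h | h
    · exact h
    · exact absurd (by rw [← h, zero_mul]) hne
  have hw1' : ∑ p ∈ t, w p = 1 := by
    have := hsum (fun _ => 1); simpa [hw1] using this.symm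
  have htne : t.Nonempty := by
    by_contra h
    rw [not_nonempty_iff_eq_empty] at h
    rw [h, Finset.sum_empty] at hw1'; norm_num at hw1'
  by_contra hcon
  push_neg at hcon
  have : ∑ p ∈ t, w p * c < ∑ p ∈ t, w p * f p := by
    refine Finset.sum_lt_sum_of_nonempty htne ?_
    intro p hp
    have hwp : 0 < w p := (mem_filter.mp hp).2
    exact (mul_lt_mul_iff_right₀ hwp).mpr (hcon p (hts hp))
  rw [← Finset.sum_mul, hw1', one_mul] at this
  have := lt_of_lt_of_le this (le_of_eq (hsum f).symm)
  exact absurd hfc (not_le.mpr this)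

lemma key_lemma (P : Finset E) (a : E) (ha : a ∈ convexHull ℝ (P : Set E)) (u : E)
    (D : ℝ) (hD : 0 ≤ D) (hdiam : ∀ p ∈ P, ∀ q ∈ P, dist p q ≤ D) :
    ∃ p ∈ P, 2 * inner ℝ u (p - a) + ‖p - a‖ ^ 2 ≤ D ^ 2 / 2 := by
  classical
  rw [Finset.convexHull_eq] at ha
  obtain ⟨w, hw0, hw1, hwa⟩ := ha
  have hwa' : ∑ p ∈ P, w p • p = a := by
    rw [← hwa, Finset.centerMass_eq_of_sum_1 _ _ hw1]; rfl
  -- S := ∑ w p * ‖p - a‖²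
  set S : ℝ := ∑ p ∈ P, w p * ‖p - a‖ ^ 2 with hS
  -- compute S = ∑ w‖p‖² - ‖a‖²
  have hinner : ∀ x : E, ∑ p ∈ P, w p * (inner ℝ p x : ℝ) = inner ℝ a x := by
    intro x
    rw [← hwa', sum_inner]
    simp [real_inner_smul_left]
  have hSval : S = (∑ p ∈ P, w p * ‖p‖ ^ 2) - ‖a‖ ^ 2 := by
    rw [hS]
    have : ∀ p ∈ P, w p * ‖p - a‖ ^ 2
        = w p * ‖p‖ ^ 2 - 2 * (w p * inner ℝ p a) + w p * ‖a‖ ^ 2 := by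
      intro p _
      rw [@norm_sub_sq_real]
      ring
    rw [Finset.sum_congr rfl this]
    rw [Finset.sum_add_distrib, Finset.sum_sub_distrib, ← Finset.mul_sum,
      ← Finset.sum_mul, hinner, hw1, real_inner_self_eq_norm_sq]
    ring
  -- double sum identity
  have hT : ∑ p ∈ P, ∑ q ∈ P, w p * w q * ‖p - q‖ ^ 2 = 2 * S := by
    have hpq : ∀ p ∈ P, ∑ q ∈ P, w p * w q * ‖p - q‖ ^ 2
        = w p * ‖p‖ ^ 2 + w p * ((∑ q ∈ P, w q * ‖q‖ ^ 2) - 2 * inner ℝ a p) := by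
      intro p _
      have step : ∀ q ∈ P, w p * w q * ‖p - q‖ ^ 2
          = w p * (w q * ‖p‖ ^ 2) + w p * (w q * ‖q‖ ^ 2 - 2 * (w q * (inner ℝ q p : ℝ))) := by
        intro q _
        rw [@norm_sub_sq_real, real_inner_comm]
        ring
      rw [Finset.sum_congr rfl step, Finset.sum_add_distrib, ← Finset.mul_sum, ← Finset.mul_sum]
      have e1 : ∑ i ∈ P, w i * ‖p‖ ^ 2 = ‖p‖ ^ 2 := by
        rw [← Finset.sum_mul, hw1, one_mul]
      have e2 : ∑ i ∈ P, (w i * ‖i‖ ^ 2 - 2 * (w i * (inner ℝ i p : ℝ)))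
          = (∑ q ∈ P, w q * ‖q‖ ^ 2) - 2 * inner ℝ a p := by
        rw [Finset.sum_sub_distrib, ← Finset.mul_sum, hinner]
      rw [e1, e2]
    rw [Finset.sum_congr rfl hpq, Finset.sum_add_distrib]
    have e3 : ∀ x ∈ P, w x * ((∑ q ∈ P, w q * ‖q‖ ^ 2) - 2 * (inner ℝ a x : ℝ))
        = w x * (∑ q ∈ P, w q * ‖q‖ ^ 2) - 2 * (w x * (inner ℝ x a : ℝ)) := by
      intro x _; rw [real_inner_comm]; ring
    rw [Finset.sum_congr rfl e3, Finset.sum_sub_distrib, ← Finset.sum_mul, hw1, one_mul,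
      ← Finset.mul_sum, hinner, hSval, real_inner_self_eq_norm_sq]
    ring
  have hTle : ∑ p ∈ P, ∑ q ∈ P, w p * w q * ‖p - q‖ ^ 2 ≤ D ^ 2 := by
    calc ∑ p ∈ P, ∑ q ∈ P, w p * w q * ‖p - q‖ ^ 2
        ≤ ∑ p ∈ P, ∑ q ∈ P, w p * w q * D ^ 2 := by
          refine Finset.sum_le_sum fun p hp => Finset.sum_le_sum fun q hq => ?_
          have h1 : ‖p - q‖ ≤ D := by rw [← dist_eq_norm]; exact hdiam p hp q hq
          have h2 : ‖p - q‖ ^ 2 ≤ D ^ 2 := by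
            exact pow_le_pow_left₀ (norm_nonneg _) h1 2
          exact mul_le_mul_of_nonneg_left h2 (mul_nonneg (hw0 p hp) (hw0 q hq))
      _ = D ^ 2 := by
          simp only [← Finset.sum_mul, ← Finset.mul_sum]
          rw [hw1]
          ring
  have hSle : S ≤ D ^ 2 / 2 := by linarith [hT ▸ hTle]
  -- the average of f p := 2⟪u, p-a⟫ + ‖p-a‖² is S
  refine avg_exists P w hw0 hw1 _ _ ?_
  have h0 : ∑ p ∈ P, w p * (inner ℝ u (p - a) : ℝ) = 0 := by
    have : ∀ p ∈ P, w p * (inner ℝ u (p - a) : ℝ)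
        = w p * inner ℝ u p - w p * inner ℝ u a := by
      intro p _; rw [inner_sub_right]; ring
    rw [Finset.sum_congr rfl this, Finset.sum_sub_distrib]
    have h1 : ∑ p ∈ P, w p * (inner ℝ u p : ℝ) = inner ℝ u a := by
      have := hinner u
      simp_rw [real_inner_comm] at this ⊢
      exact this
    rw [h1, ← Finset.sum_mul, hw1, one_mul]
    ring
  calc ∑ p ∈ P, w p * (2 * inner ℝ u (p - a) + ‖p - a‖ ^ 2)
      = 2 * (∑ p ∈ P, w p * (inner ℝ u (p - a) : ℝ)) + S := by
        rw [hS, Finset.mul_sum, ← Finset.sum_add_distrib]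
        refine Finset.sum_congr rfl fun p _ => by ring
    _ ≤ D ^ 2 / 2 := by rw [h0]; linarith

/-- **No-dimension Carathéodory theorem.** If `P` is a set of `n` points in
`ℝ^d`, `1 ≤ r ≤ n`, and `a ∈ convexHull ℝ P`, then there is an `r`-element
subset `Q ⊆ P` with `dist (a, convexHull ℝ Q) ≤ diam P / sqrt (2r)`. -/
theorem no_dimension_caratheodory (d n r : ℕ) (hr1 : 1 ≤ r) (hrn : r ≤ n)
    (P : Finset (EuclideanSpace ℝ (Fin d))) (hP : P.card = n)
    (a : EuclideanSpace ℝ (Fin d))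
    (ha : a ∈ convexHull ℝ (P : Set (EuclideanSpace ℝ (Fin d)))) :
    ∃ Q : Finset (EuclideanSpace ℝ (Fin d)), Q ⊆ P ∧ Q.card = r ∧
      Metric.infDist a (convexHull ℝ (Q : Set (EuclideanSpace ℝ (Fin d)))) ≤
        Metric.diam (P : Set (EuclideanSpace ℝ (Fin d))) / Real.sqrt (2 * r) := by
  classical
  set D := Metric.diam (P : Set (EuclideanSpace ℝ (Fin d))) with hD
  have hD0 : 0 ≤ D := Metric.diam_nonneg
  have hdiam : ∀ p ∈ P, ∀ q ∈ P, dist p q ≤ D := fun p hp q hq =>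
    Metric.dist_le_diam_of_mem (P.finite_toSet.isBounded) hp hq
  -- main induction
  have main : ∀ k : ℕ, 1 ≤ k → ∃ (Q : Finset (EuclideanSpace ℝ (Fin d))) (b : (EuclideanSpace ℝ (Fin d))), Q ⊆ P ∧ Q.Nonempty ∧
      Q.card ≤ k ∧ b ∈ convexHull ℝ (Q : Set (EuclideanSpace ℝ (Fin d))) ∧ ‖b - a‖ ^ 2 ≤ D ^ 2 / (2 * k) := by
    intro k hk
    induction k with
    | zero => omega
    | succ k ih =>
      rcases Nat.eq_or_lt_of_le hk with h1 | h2
      · -- base case k+1 = 1, so k = 0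
        have hk0 : k = 0 := by omega
        subst hk0
        obtain ⟨p, hp, hple⟩ := key_lemma P a ha 0 D hD0 hdiam
        refine ⟨{p}, p, by simpa using hp, singleton_nonempty p, by simp, ?_, ?_⟩
        · exact subset_convexHull ℝ _ (by simp)
        · simp only [inner_zero_left, mul_zero, zero_add] at hple
          calc ‖p - a‖ ^ 2 ≤ D ^ 2 / 2 := hple
            _ = D ^ 2 / (2 * 1) := by norm_num
            _ ≤ D ^ 2 / (2 * (0 + 1 : ℕ)) := by norm_num
      · -- inductive step, k ≥ 1
        have hk1 : 1 ≤ k := by omega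
        obtain ⟨Q, b, hQP, hQne, hQcard, hbQ, hbnorm⟩ := ih hk1
        obtain ⟨p, hp, hple⟩ := key_lemma P a ha ((k : ℝ) • (b - a)) D hD0 hdiam
        have hkpos : (0 : ℝ) < k := by exact_mod_cast hk1
        set t : ℝ := 1 / (k + 1) with htdef
        have ht0 : 0 ≤ t := by positivity
        have ht1 : t ≤ 1 := by rw [htdef]; rw [div_le_one (by positivity)]; linarith
        set b' : (EuclideanSpace ℝ (Fin d)) := (1 - t) • b + t • p with hb'
        refine ⟨insert p Q, b', ?_, ⟨p, mem_insert_self p Q⟩, ?_, ?_, ?_⟩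
        · exact insert_subset hp hQP
        · calc (insert p Q).card ≤ Q.card + 1 := card_insert_le _ _
            _ ≤ k + 1 := by omega
        · have h1 : b ∈ convexHull ℝ ((insert p Q : Finset (EuclideanSpace ℝ (Fin d))) : Set (EuclideanSpace ℝ (Fin d))) :=
            convexHull_mono (by simp [Finset.coe_insert, Set.subset_insert]) hbQ
          have h2 : p ∈ convexHull ℝ ((insert p Q : Finset (EuclideanSpace ℝ (Fin d))) : Set (EuclideanSpace ℝ (Fin d))) :=
            subset_convexHull ℝ _ (by simp)
          exact (convex_convexHull ℝ _) h1 h2 (by linarith) ht0 (by ring)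
        · have hexp : b' - a = (1 - t) • (b - a) + t • (p - a) := by
            rw [hb']
            module
          have hnorm : ‖b' - a‖ ^ 2 = (1 - t) ^ 2 * ‖b - a‖ ^ 2
              + 2 * ((1 - t) * t) * inner ℝ (b - a) (p - a) + t ^ 2 * ‖p - a‖ ^ 2 := by
            rw [hexp, @norm_add_sq_real, real_inner_smul_left, real_inner_smul_right,
              norm_smul, norm_smul, mul_pow, mul_pow]
            rw [Real.norm_eq_abs, Real.norm_eq_abs, sq_abs, sq_abs]
            ring
          have h1t : 1 - t = (k : ℝ) / (k + 1) := by
            rw [htdef]; field_simp; ring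
          have hkey : 2 * (k : ℝ) * inner ℝ (b - a) (p - a) + ‖p - a‖ ^ 2 ≤ D ^ 2 / 2 := by
            have := hple
            rw [real_inner_smul_left] at this
            linarith
          have hbound : ‖b - a‖ ^ 2 ≤ D ^ 2 / (2 * k) := by
            exact_mod_cast hbnorm
          rw [hnorm, h1t, htdef]
          have hk1pos : (0 : ℝ) < (k : ℝ) + 1 := by positivity
          rw [div_pow, div_pow, one_pow]
          have hfin : (k : ℝ) ^ 2 * ‖b - a‖ ^ 2 + 2 * ((k : ℝ) * inner ℝ (b - a) (p - a))
              + ‖p - a‖ ^ 2 ≤ (k : ℝ) ^ 2 * (D ^ 2 / (2 * k)) + D ^ 2 / 2 := by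
            nlinarith [hbound, hkey, sq_nonneg (k : ℝ)]
          have hsq : (k : ℝ) ^ 2 * (D ^ 2 / (2 * k)) + D ^ 2 / 2
              = ((k : ℝ) + 1) * D ^ 2 / 2 := by
            field_simp
          have hgoal : ((k : ℝ) + 1) * D ^ 2 / 2 / ((k : ℝ) + 1) ^ 2
              = D ^ 2 / (2 * ((k : ℝ) + 1)) := by
            field_simp
          have hcast : ((k + 1 : ℕ) : ℝ) = (k : ℝ) + 1 := by push_cast; ring
          rw [hcast]
          calc (k : ℝ) ^ 2 / ((k : ℝ) + 1) ^ 2 * ‖b - a‖ ^ 2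
              + 2 * ((k : ℝ) / ((k : ℝ) + 1) * (1 / ((k : ℝ) + 1))) * inner ℝ (b - a) (p - a)
              + 1 / ((k : ℝ) + 1) ^ 2 * ‖p - a‖ ^ 2
              = ((k : ℝ) ^ 2 * ‖b - a‖ ^ 2 + 2 * ((k : ℝ) * inner ℝ (b - a) (p - a))
                + ‖p - a‖ ^ 2) / ((k : ℝ) + 1) ^ 2 := by field_simp
            _ ≤ (((k : ℝ) + 1) * D ^ 2 / 2) / ((k : ℝ) + 1) ^ 2 := by
                rw [← hsq]
                gcongr
            _ = D ^ 2 / (2 * ((k : ℝ) + 1)) := hgoal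
  obtain ⟨Q, b, hQP, hQne, hQcard, hbQ, hbnorm⟩ := main r hr1
  obtain ⟨Q', hQQ', hQ'P, hQ'card⟩ :=
    Finset.exists_subsuperset_card_eq hQP hQcard (by omega)
  refine ⟨Q', hQ'P, hQ'card, ?_⟩
  have hbQ' : b ∈ convexHull ℝ (Q' : Set (EuclideanSpace ℝ (Fin d))) :=
    convexHull_mono (Finset.coe_subset.mpr hQQ') hbQ
  have h1 : Metric.infDist a (convexHull ℝ (Q' : Set (EuclideanSpace ℝ (Fin d)))) ≤ dist a b :=
    Metric.infDist_le_dist_of_mem hbQ'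
  have hrpos : (0 : ℝ) < 2 * r := by positivity
  have h2 : dist a b ≤ D / Real.sqrt (2 * r) := by
    rw [dist_eq_norm, ← norm_neg, neg_sub]
    have h3 : ‖b - a‖ ^ 2 ≤ D ^ 2 / (2 * r) := hbnorm
    have h4 : ‖b - a‖ = Real.sqrt (‖b - a‖ ^ 2) := (Real.sqrt_sq (norm_nonneg _)).symm
    rw [h4]
    calc Real.sqrt (‖b - a‖ ^ 2) ≤ Real.sqrt (D ^ 2 / (2 * r)) := Real.sqrt_le_sqrt h3
      _ = D / Real.sqrt (2 * r) := by
          rw [Real.sqrt_div (sq_nonneg D), Real.sqrt_sq hD0]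
  exact h1.trans h2
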